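/- For integers r_1 ≥ r_2 ≥ ... ≥ r_t ≥ 1, the general position number of the complete multipartite graph K_{r_1,...,r_t} equals max{r_1, t}. -/

import Mathlib

open SimpleGraph

/-- A walk is an *induced (monophonic) path* if it is a path and vertices on the
walk are adjacent in `G` exactly when they are consecutive on the walk. -/
def IsInducedPathW {V : Type*} (G : SimpleGraph V) {u v : V} (p : G.Walk u v) : Prop :=
  p.IsPath ∧ ∀ a b : V, a ∈ p.support → b ∈ p.support → (G.Adj a b ↔ p.toSubgraph.Adj a b)

/-- A walk is a *geodesic* if it is a shortest path between its endpoints. -/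
def IsGeodesicW {V : Type*} (G : SimpleGraph V) {u v : V} (p : G.Walk u v) : Prop :=
  p.IsPath ∧ p.length = G.dist u v

/-- A set of vertices is in *monophonic position* if no induced path of `G`
contains more than two of its vertices. -/
def IsMpSet {V : Type*} (G : SimpleGraph V) (S : Set V) : Prop :=
  ∀ ⦃u v : V⦄ (p : G.Walk u v), IsInducedPathW G p → (S ∩ {x | x ∈ p.support}).ncard ≤ 2

/-- A set of vertices is in *general position* if no geodesic of `G` contains
more than two of its vertices. -/
def IsGpSet {V : Type*} (G : SimpleGraph V) (S : Set V) : Prop :=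
  ∀ ⦃u v : V⦄ (p : G.Walk u v), IsGeodesicW G p → (S ∩ {x | x ∈ p.support}).ncard ≤ 2

/-- The monophonic position number `mp(G)`. -/
noncomputable def mpNum {V : Type*} (G : SimpleGraph V) : ℕ :=
  sSup {n | ∃ S : Set V, IsMpSet G S ∧ S.ncard = n}

/-- The general position number `gp(G)`. -/
noncomputable def gpNum {V : Type*} (G : SimpleGraph V) : ℕ :=
  sSup {n | ∃ S : Set V, IsGpSet G S ∧ S.ncard = n}

section CMPAux

variable {t : ℕ} {r : Fin t → ℕ}

lemma cmpAdj {u v : Σ i, Fin (r i)} :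
    (completeMultipartiteGraph fun i => Fin (r i)).Adj u v ↔ u.1 ≠ v.1 := Iff.rfl

lemma geo_len_le {u v : Σ i, Fin (r i)}
    (p : (completeMultipartiteGraph fun i => Fin (r i)).Walk u v)
    (hp : IsGeodesicW _ p) : p.length ≤ 2 := by
  obtain ⟨hpath, hlen⟩ := hp
  by_contra hcon
  push_neg at hcon
  have hne : u ≠ v := by
    rintro rfl
    rw [SimpleGraph.dist_self] at hlen
    omega
  cases p with
  | nil => exact hne rfl
  | @cons _ w _ ha q =>
    by_cases hadj : (completeMultipartiteGraph fun i => Fin (r i)).Adj u v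
    · have h1 : (completeMultipartiteGraph fun i => Fin (r i)).dist u v ≤ 1 := by
        simpa using SimpleGraph.dist_le (Walk.cons hadj Walk.nil)
      simp only [Walk.length_cons] at hlen hcon
      omega
    · have huv : u.1 = v.1 := by
        by_contra h; exact hadj (cmpAdj.mpr h)
      have hwv : (completeMultipartiteGraph fun i => Fin (r i)).Adj w v := by
        rw [cmpAdj]; rw [← huv]; exact (cmpAdj.mp ha).symm
      have h2 : (completeMultipartiteGraph fun i => Fin (r i)).dist u v ≤ 2 := by
        simpa using SimpleGraph.dist_le (Walk.cons ha (Walk.cons hwv Walk.nil))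
      simp only [Walk.length_cons] at hlen hcon
      omega

lemma support_cases {u v : Σ i, Fin (r i)}
    (p : (completeMultipartiteGraph fun i => Fin (r i)).Walk u v)
    (hp : IsGeodesicW _ p) :
    (∀ x ∈ p.support, x = u ∨ x = v) ∨
    ∃ w, (∀ x ∈ p.support, x = u ∨ x = w ∨ x = v) ∧ u.1 = v.1 ∧ w.1 ≠ u.1 ∧ u ≠ v := by
  have h2 := geo_len_le p hp
  match p with
  | .nil => left; simp
  | .cons ha .nil => left; intro x hx; simpa using hx
  | @Walk.cons _ _ _ w _ ha (.cons hb .nil) =>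
    right
    have hne : u ≠ v := by
      rintro rfl
      have := hp.2
      rw [SimpleGraph.dist_self] at this
      simp at this
    have huv : u.1 = v.1 := by
      by_contra h
      have h1 : (completeMultipartiteGraph fun i => Fin (r i)).dist u v ≤ 1 := by
        simpa using SimpleGraph.dist_le (Walk.cons (cmpAdj.mpr h) Walk.nil)
      have := hp.2
      simp only [Walk.length_cons, Walk.length_nil] at this
      omega
    exact ⟨w, by intro x hx; simpa using hx, huv, (cmpAdj.mp ha).symm, hne⟩
  | .cons _ (.cons _ (.cons _ _)) => simp only [Walk.length_cons] at h2; omega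

lemma inter_le_two {V : Type*} [Finite V] {S T : Set V} (a b : V) (h : S ∩ T ⊆ {a, b}) :
    (S ∩ T).ncard ≤ 2 :=
  le_trans (Set.ncard_le_ncard h (Set.toFinite _))
    (le_trans (Set.ncard_insert_le a {b}) (by simp))

lemma ncard_part (i : Fin t) : {x : Σ j, Fin (r j) | x.1 = i}.ncard = r i := by
  have h : {x : Σ j, Fin (r j) | x.1 = i} = Set.range (Sigma.mk i) := by
    ext ⟨j, a⟩
    simp only [Set.mem_setOf_eq, Set.mem_range]
    constructor
    · rintro rfl; exact ⟨a, rfl⟩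
    · rintro ⟨b, hb⟩; exact (congrArg Sigma.fst hb).symm
  rw [h, ← Set.image_univ, Set.ncard_image_of_injective _ sigma_mk_injective,
    Set.ncard_univ]
  simp

lemma ncard_trans (hr : ∀ i, 1 ≤ r i) :
    (Set.range fun i : Fin t => (⟨i, ⟨0, hr i⟩⟩ : Σ j, Fin (r j))).ncard = t := by
  rw [← Set.image_univ, Set.ncard_image_of_injective _ (fun a b h => congrArg Sigma.fst h),
    Set.ncard_univ]
  simp

lemma part_isGp (i : Fin t) :
    IsGpSet (completeMultipartiteGraph fun j => Fin (r j)) {x : Σ j, Fin (r j) | x.1 = i} := by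
  intro u v p hp
  rcases support_cases p hp with h | ⟨w, hsupp, huv, hwu, hne⟩
  · exact inter_le_two u v (by rintro x ⟨_, hx⟩; rcases h x hx with rfl | rfl <;> simp)
  · by_cases hui : u.1 = i
    · refine inter_le_two u v ?_
      rintro x ⟨hxS, hx⟩
      rcases hsupp x hx with rfl | rfl | rfl
      · simp
      · exact absurd (hxS.trans hui.symm) hwu
      · simp
    · refine inter_le_two w w ?_
      rintro x ⟨hxS, hx⟩
      rcases hsupp x hx with rfl | rfl | rfl
      · exact absurd hxS hui
      · simp
      · exact absurd (huv.trans hxS) hui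

lemma trans_isGp (hr : ∀ i, 1 ≤ r i) :
    IsGpSet (completeMultipartiteGraph fun j => Fin (r j))
      (Set.range fun i : Fin t => (⟨i, ⟨0, hr i⟩⟩ : Σ j, Fin (r j))) := by
  intro u v p hp
  rcases support_cases p hp with h | ⟨w, hsupp, huv, hwu, hne⟩
  · exact inter_le_two u v (by rintro x ⟨_, hx⟩; rcases h x hx with rfl | rfl <;> simp)
  · by_cases huS : u ∈ Set.range fun i : Fin t => (⟨i, ⟨0, hr i⟩⟩ : Σ j, Fin (r j))
    · refine inter_le_two u w ?_
      rintro x ⟨hxS, hx⟩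
      rcases hsupp x hx with rfl | rfl | rfl
      · simp
      · simp
      · exfalso
        obtain ⟨a, ha⟩ := huS
        obtain ⟨b, hb⟩ := hxS
        have h1 : a = u.1 := congrArg Sigma.fst ha
        have h2 : b = x.1 := congrArg Sigma.fst hb
        have hab : a = b := by rw [h1, h2]; exact huv
        exact hne (by rw [← ha, hab, hb])
    · refine inter_le_two w v ?_
      rintro x ⟨hxS, hx⟩
      rcases hsupp x hx with rfl | rfl | rfl
      · exact absurd hxS huS
      · simp
      · simp

lemma gp_card_le (ht : 0 < t) (hmono : ∀ i j : Fin t, i ≤ j → r j ≤ r i)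
    (S : Set (Σ j, Fin (r j)))
    (hS : IsGpSet (completeMultipartiteGraph fun j => Fin (r j)) S) :
    S.ncard ≤ max (r ⟨0, ht⟩) t := by
  by_contra hcon
  push_neg at hcon
  have h1 : r ⟨0, ht⟩ < S.ncard := lt_of_le_of_lt (le_max_left _ _) hcon
  have h2 : t < S.ncard := lt_of_le_of_lt (le_max_right _ _) hcon
  haveI : Fintype ↥S := Fintype.ofFinite _
  have hcard : Fintype.card (Fin t) < Fintype.card S := by
    rw [Fintype.card_fin, ← Nat.card_eq_fintype_card, Nat.card_coe_set_eq]
    exact h2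
  obtain ⟨x, y, hxy, hf⟩ :=
    Fintype.exists_ne_map_eq_of_card_lt (fun z : S => (z : Σ j, Fin (r j)).1) hcard
  have huv : (x : Σ j, Fin (r j)) ≠ y := fun h => hxy (Subtype.ext h)
  obtain ⟨w, hwS, hw⟩ : ∃ w ∈ S, w.1 ≠ (x : Σ j, Fin (r j)).1 := by
    by_contra hsub
    push_neg at hsub
    have : S ⊆ {z : Σ j, Fin (r j) | z.1 = (x : Σ j, Fin (r j)).1} := fun z hz => hsub z hz
    have hle := Set.ncard_le_ncard this (Set.toFinite _)
    rw [ncard_part] at hle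
    have := hmono ⟨0, ht⟩ (x : Σ j, Fin (r j)).1 (by simp [Fin.le_def])
    omega
  have hadj1 : (completeMultipartiteGraph fun j => Fin (r j)).Adj x w :=
    cmpAdj.mpr (Ne.symm hw)
  have hadj2 : (completeMultipartiteGraph fun j => Fin (r j)).Adj w y :=
    cmpAdj.mpr (by rw [← hf]; exact hw)
  set q := Walk.cons hadj1 (Walk.cons hadj2 Walk.nil) with hq
  have hxw : (x : Σ j, Fin (r j)) ≠ w := fun h => hw (by rw [h])
  have hwy : w ≠ (y : Σ j, Fin (r j)) := hadj2.ne
  have hpath : q.IsPath := by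
    rw [hq, Walk.isPath_def]
    simp [huv, hxw, hwy]
  have hdle : (completeMultipartiteGraph fun j => Fin (r j)).dist x y ≤ 2 := by
    simpa [hq] using SimpleGraph.dist_le q
  have hd0 : (completeMultipartiteGraph fun j => Fin (r j)).dist x y ≠ 0 := by
    intro hd
    rcases SimpleGraph.dist_eq_zero_iff_eq_or_not_reachable.mp hd with h | h
    · exact huv h
    · exact h ⟨q⟩
  have hd1 : (completeMultipartiteGraph fun j => Fin (r j)).dist x y ≠ 1 := by
    intro hd
    exact (SimpleGraph.dist_eq_one_iff_adj.mp hd) hf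
  have hgeo : IsGeodesicW _ q := ⟨hpath, by simp [hq]; omega⟩
  have hb := hS q hgeo
  have hsub : {(x : Σ j, Fin (r j)), w, (y : Σ j, Fin (r j))} ⊆ S ∩ {z | z ∈ q.support} := by
    intro z hz
    rcases hz with rfl | rfl | rfl
    · exact ⟨x.2, by simp [hq]⟩
    · exact ⟨hwS, by simp [hq]⟩
    · exact ⟨y.2, by simp [hq]⟩
  have h3 : ({(x : Σ j, Fin (r j)), w, (y : Σ j, Fin (r j))} : Set _).ncard = 3 :=
    Set.ncard_eq_three.mpr ⟨_, _, _, hxw, huv, hwy, rfl⟩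
  have := Set.ncard_le_ncard hsub (Set.toFinite _)
  omega

theorem completeMultipartite_gpNum' (t : ℕ) (ht : 0 < t) (r : Fin t → ℕ)
    (hr : ∀ i, 1 ≤ r i) (hmono : ∀ i j : Fin t, i ≤ j → r j ≤ r i) :
    (sSup {n | ∃ S : Set (Σ i, Fin (r i)),
      IsGpSet (completeMultipartiteGraph fun i => Fin (r i)) S ∧ S.ncard = n}) = max (r ⟨0, ht⟩) t := by
  have hbdd : BddAbove {n | ∃ S : Set (Σ i, Fin (r i)),
      IsGpSet (completeMultipartiteGraph fun i => Fin (r i)) S ∧ S.ncard = n} := by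
    refine ⟨Nat.card (Σ i, Fin (r i)), ?_⟩
    rintro n ⟨S, _, rfl⟩
    calc S.ncard ≤ (Set.univ : Set (Σ i, Fin (r i))).ncard :=
          Set.ncard_le_ncard (Set.subset_univ S) (Set.toFinite _)
      _ = _ := Set.ncard_univ _
  apply le_antisymm
  · apply csSup_le
    · exact ⟨0, ∅, by intro u v p hp; simp, by simp⟩
    · rintro n ⟨S, hS, rfl⟩
      exact gp_card_le ht hmono S hS
  · rcases le_total t (r ⟨0, ht⟩) with hle | hle
    · rw [max_eq_left hle]
      exact le_csSup hbdd ⟨{x : Σ j, Fin (r j) | x.1 = ⟨0, ht⟩}, part_isGp _, ncard_part _⟩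
    · rw [max_eq_right hle]
      exact le_csSup hbdd
        ⟨Set.range fun i : Fin t => (⟨i, ⟨0, hr i⟩⟩ : Σ j, Fin (r j)), trans_isGp hr, ncard_trans hr⟩

end CMPAux

theorem completeMultipartite_gpNum (t : ℕ) (ht : 0 < t) (r : Fin t → ℕ)
    (hr : ∀ i, 1 ≤ r i) (hmono : ∀ i j : Fin t, i ≤ j → r j ≤ r i) :
    gpNum (completeMultipartiteGraph fun i => Fin (r i)) = max (r ⟨0, ht⟩) t :=
  completeMultipartite_gpNum' t ht r hr hmono
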